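/- arXiv:2203.06616 — 4 statements merged into one kernel-verified Lean document; each statement's English description precedes it below -/
import Mathlib

section
/- Let F and E be real inner product spaces, let Θ ⊆ F be a convex set, and let f : F × E → ℝ be such that for each w ∈ E the map θ ↦ f(θ, w) has a gradient ∇_θ f(θ, w), and the map (θ, w) ↦ ∇_θ f(θ, w) satisfies ‖∇_θ f(θ, w) − ∇_θ f(θ, w')‖ ≤ L_θw ‖w − w'‖ for all θ ∈ Θ and w, w' ∈ E, where L_θw > 0. Suppose for each w ∈ E the map θ ↦ f(θ, w) is μ-strongly concave on Θ with μ > 0, i.e. f(θ₁, w) − f(θ₂, w) ≤ ⟪∇_θ f(θ₂, w), θ₁ − θ₂⟫ − (μ/2)‖θ₁ − θ₂‖² for all θ₁, θ₂ ∈ Θ. If θ₁ ∈ Θ is a maximizer of f(·, w₁) over Θ (so that ⟪∇_θ f(θ₁, w₁), θ − θ₁⟫ ≤ 0 for all θ ∈ Θ) and θ₂ ∈ Θ is a maximizer of f(·, w₂) over Θ (so that ⟪∇_θ f(θ₂, w₂), θ − θ₂⟫ ≤ 0 for all θ ∈ Θ), then μ ‖θ₁ − θ₂‖ ≤ L_θw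 ‖w₁ − w₂‖. -/
open RealInnerProductSpace

/-- For a function `f : F × E → ℝ` whose partial gradient in `θ`
is `L_θw`-Lipschitz in `w` on the convex set `Θ`, and which is `μ`-strongly
concave in `θ` on `Θ`, any two maximizers `θ₁` of `f(·, w₁)` and `θ₂` of
`f(·, w₂)` over `Θ` satisfy `μ‖θ₁ - θ₂‖ ≤ L_θw ‖w₁ - w₂‖`. -/
theorem maximizers_lipschitz_in_w
    {F E : Type*} [NormedAddCommGroup F] [InnerProductSpace ℝ F]
    [NormedAddCommGroup E] [InnerProductSpace ℝ E]
    (Θ : Set F) (hΘ : Convex ℝ Θ)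
    (f : F → E → ℝ) (gradθ : F → E → F)
    (hdiff : ∀ (w : E) (θ : F), HasFDerivAt (fun θ' => f θ' w) (innerSL ℝ (gradθ θ w)) θ)
    (Lθw μ : ℝ) (hLθw : 0 < Lθw) (hμ : 0 < μ)
    (hLip : ∀ θ ∈ Θ, ∀ w w' : E, ‖gradθ θ w - gradθ θ w'‖ ≤ Lθw * ‖w - w'‖)
    (hconc : ∀ (w : E), ∀ θ₁ ∈ Θ, ∀ θ₂ ∈ Θ,
      f θ₁ w - f θ₂ w ≤ ⟪gradθ θ₂ w, θ₁ - θ₂⟫ - μ / 2 * ‖θ₁ - θ₂‖ ^ 2)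
    (w₁ w₂ : E) (θ₁ θ₂ : F) (hθ₁ : θ₁ ∈ Θ) (hθ₂ : θ₂ ∈ Θ)
    (hopt₁ : ∀ θ ∈ Θ, ⟪gradθ θ₁ w₁, θ - θ₁⟫ ≤ 0)
    (hopt₂ : ∀ θ ∈ Θ, ⟪gradθ θ₂ w₂, θ - θ₂⟫ ≤ 0) :
    μ * ‖θ₁ - θ₂‖ ≤ Lθw * ‖w₁ - w₂‖ := by
  rcases eq_or_ne θ₁ θ₂ with h | h
  · simp [h]
    positivity
  have hd : 0 < ‖θ₁ - θ₂‖ := by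
    rw [norm_pos_iff, sub_ne_zero]; exact h
  -- strong concavity both ways at w₁
  have h1 := hconc w₁ θ₂ hθ₂ θ₁ hθ₁
  have h2 := hconc w₁ θ₁ hθ₁ θ₂ hθ₂
  have hsum : μ * ‖θ₁ - θ₂‖ ^ 2 ≤ ⟪gradθ θ₂ w₁ - gradθ θ₁ w₁, θ₁ - θ₂⟫ := by
    have e1 : ⟪gradθ θ₁ w₁, θ₂ - θ₁⟫ = -⟪gradθ θ₁ w₁, θ₁ - θ₂⟫ := by
      rw [show θ₂ - θ₁ = -(θ₁ - θ₂) by abel, inner_neg_right]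
    have e2 : ‖θ₂ - θ₁‖ = ‖θ₁ - θ₂‖ := norm_sub_rev _ _
    rw [inner_sub_left]
    rw [e1, e2] at h1
    nlinarith [h1, h2]
  have hA : -⟪gradθ θ₁ w₁, θ₁ - θ₂⟫ ≤ 0 := by
    have h0 := hopt₁ θ₂ hθ₂
    rw [show θ₂ - θ₁ = -(θ₁ - θ₂) by abel, inner_neg_right] at h0
    linarith
  have hB : ⟪gradθ θ₂ w₂, θ₁ - θ₂⟫ ≤ 0 := hopt₂ θ₁ hθ₁
  have hC : ⟪gradθ θ₂ w₁ - gradθ θ₂ w₂, θ₁ - θ₂⟫ ≤ Lθw * ‖w₁ - w₂‖ * ‖θ₁ - θ₂‖ := by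
    calc ⟪gradθ θ₂ w₁ - gradθ θ₂ w₂, θ₁ - θ₂⟫
        ≤ ‖gradθ θ₂ w₁ - gradθ θ₂ w₂‖ * ‖θ₁ - θ₂‖ := real_inner_le_norm _ _
      _ ≤ Lθw * ‖w₁ - w₂‖ * ‖θ₁ - θ₂‖ := by
          gcongr; exact hLip θ₂ hθ₂ w₁ w₂
  have key : μ * ‖θ₁ - θ₂‖ ^ 2 ≤ Lθw * ‖w₁ - w₂‖ * ‖θ₁ - θ₂‖ := by
    have : ⟪gradθ θ₂ w₁ - gradθ θ₁ w₁, θ₁ - θ₂⟫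
        = ⟪gradθ θ₂ w₁ - gradθ θ₂ w₂, θ₁ - θ₂⟫ + ⟪gradθ θ₂ w₂, θ₁ - θ₂⟫
          + (-⟪gradθ θ₁ w₁, θ₁ - θ₂⟫) := by
      rw [inner_sub_left, inner_sub_left]; ring
    linarith [hsum, this ▸ hsum]
  nlinarith [key, hd]
end

section
/- Let F and E be real inner product spaces, Θ ⊆ F a convex set, and f : F × E → ℝ with partial gradients ∇_θ f and ∇_w f. Assume: (i) ‖∇_w f(θ, w) − ∇_w f(θ, w')‖ ≤ L_ww ‖w − w'‖ for all θ ∈ Θ, w, w' ∈ E; (ii) ‖∇_w f(θ, w) − ∇_w f(θ', w)‖ ≤ L_wθ ‖θ − θ'‖ for all θ, θ' ∈ Θ, w ∈ E; (iii) ‖∇_θ f(θ, w) − ∇_θ f(θ, w')‖ ≤ L_θw ‖w − w'‖ for all θ ∈ Θ, w, w' ∈ E, with L_ww, L_wθ, L_θw > 0; (iv) for every w, θ ↦ f(θ, w) is μ-strongly concave on Θ with μ > 0. Let θ* : E → Θ assign to each w a maximizer of f(·, w) over Θ, i.e. ⟪∇_θ f(θ*(w), w), θ − θ*(w)⟫ ≤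 0 for all θ ∈ Θ. Then the map w ↦ ∇_w f(θ*(w), w) is Lipschitz continuous with constant L₀ = L_wθ L_θw / μ + L_ww, i.e. ‖∇_w f(θ*(w₁), w₁) − ∇_w f(θ*(w₂), w₂)‖ ≤ L₀ ‖w₁ − w₂‖ for all w₁, w₂ ∈ E. -/
open RealInnerProductSpace

/-- Lemma 1, gradient part: under the Lipschitz gradient conditions
and `μ`-strong concavity in `θ`, the map `w ↦ ∇_w f(θ*(w), w)` along the
maximizer selection `θ*` is Lipschitz with constant `L₀ = L_wθ L_θw / μ + L_ww`. -/
theorem grad_of_max_is_lipschitz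
    {F E : Type*} [NormedAddCommGroup F] [InnerProductSpace ℝ F]
    [NormedAddCommGroup E] [InnerProductSpace ℝ E]
    (Θ : Set F) (hΘ : Convex ℝ Θ)
    (f : F → E → ℝ) (gradθ : F → E → F) (gradw : F → E → E)
    (hdiffθ : ∀ (w : E) (θ : F), HasFDerivAt (fun θ' => f θ' w) (innerSL ℝ (gradθ θ w)) θ)
    (hdiffw : ∀ (θ : F) (w : E), HasFDerivAt (fun w' => f θ w') (innerSL ℝ (gradw θ w)) w)
    (Lww Lwθ Lθw μ : ℝ) (hLww : 0 < Lww) (hLwθ : 0 < Lwθ) (hLθw : 0 < Lθw) (hμ : 0 < μ)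
    (hLip₁ : ∀ θ ∈ Θ, ∀ w w' : E, ‖gradw θ w - gradw θ w'‖ ≤ Lww * ‖w - w'‖)
    (hLip₂ : ∀ θ ∈ Θ, ∀ θ' ∈ Θ, ∀ w : E, ‖gradw θ w - gradw θ' w‖ ≤ Lwθ * ‖θ - θ'‖)
    (hLip₃ : ∀ θ ∈ Θ, ∀ w w' : E, ‖gradθ θ w - gradθ θ w'‖ ≤ Lθw * ‖w - w'‖)
    (hconc : ∀ (w : E), ∀ θ₁ ∈ Θ, ∀ θ₂ ∈ Θ,
      f θ₁ w - f θ₂ w ≤ ⟪gradθ θ₂ w, θ₁ - θ₂⟫ - μ / 2 * ‖θ₁ - θ₂‖ ^ 2)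
    (θstar : E → F) (hθstar : ∀ w : E, θstar w ∈ Θ)
    (hopt : ∀ (w : E), ∀ θ ∈ Θ, ⟪gradθ (θstar w) w, θ - θstar w⟫ ≤ 0) :
    ∀ w₁ w₂ : E,
      ‖gradw (θstar w₁) w₁ - gradw (θstar w₂) w₂‖ ≤
        (Lwθ * Lθw / μ + Lww) * ‖w₁ - w₂‖ := by
  intro w₁ w₂
  set θ₁ := θstar w₁ with hθ₁
  set θ₂ := θstar w₂ with hθ₂
  set d : F := θ₁ - θ₂ with hd
  -- Step 1: strong concavity both ways at w₁
  have hc1 := hconc w₁ θ₁ (hθstar w₁) θ₂ (hθstar w₂)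
  have hc2 := hconc w₁ θ₂ (hθstar w₂) θ₁ (hθstar w₁)
  have hnorm : ‖θ₂ - θ₁‖ = ‖d‖ := by rw [hd, ← norm_neg, neg_sub]
  have hsum : μ * ‖d‖ ^ 2 ≤ ⟪gradθ θ₂ w₁, d⟫ - ⟪gradθ θ₁ w₁, d⟫ := by
    have h2 : ⟪gradθ θ₁ w₁, θ₂ - θ₁⟫ = -⟪gradθ θ₁ w₁, d⟫ := by
      rw [hd, ← inner_neg_right, neg_sub]
    rw [hnorm, h2] at hc2
    nlinarith [hc1, hc2]
  -- optimality at w₁ : ⟪gradθ θ₁ w₁, θ₂ - θ₁⟫ ≤ 0, i.e. ⟪gradθ θ₁ w₁, d⟫ ≥ 0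
  have hop1 : 0 ≤ ⟪gradθ θ₁ w₁, d⟫ := by
    have := hopt w₁ θ₂ (hθstar w₂)
    have h2 : ⟪gradθ θ₁ w₁, θ₂ - θ₁⟫ = -⟪gradθ θ₁ w₁, d⟫ := by
      rw [hd, ← inner_neg_right, neg_sub]
    rw [h2] at this; linarith
  have hop2 : ⟪gradθ θ₂ w₂, d⟫ ≤ 0 := hopt w₂ θ₁ (hθstar w₁)
  have key : μ * ‖d‖ ^ 2 ≤ Lθw * ‖w₁ - w₂‖ * ‖d‖ := by
    have h1 : μ * ‖d‖ ^ 2 ≤ ⟪gradθ θ₂ w₁ - gradθ θ₂ w₂, d⟫ := by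
      rw [inner_sub_left]; linarith
    have h2 : ⟪gradθ θ₂ w₁ - gradθ θ₂ w₂, d⟫ ≤ ‖gradθ θ₂ w₁ - gradθ θ₂ w₂‖ * ‖d‖ :=
      real_inner_le_norm _ _
    have h3 : ‖gradθ θ₂ w₁ - gradθ θ₂ w₂‖ ≤ Lθw * ‖w₁ - w₂‖ :=
      hLip₃ θ₂ (hθstar w₂) w₁ w₂
    calc μ * ‖d‖ ^ 2 ≤ ‖gradθ θ₂ w₁ - gradθ θ₂ w₂‖ * ‖d‖ := le_trans h1 h2
      _ ≤ Lθw * ‖w₁ - w₂‖ * ‖d‖ := by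
          exact mul_le_mul_of_nonneg_right h3 (norm_nonneg _)
  have hdbound : ‖d‖ ≤ Lθw / μ * ‖w₁ - w₂‖ := by
    rcases eq_or_lt_of_le (norm_nonneg d) with h0 | h0
    · rw [← h0]
      positivity
    · have := (mul_le_mul_iff_of_pos_right h0).mp (by nlinarith [key] : μ * ‖d‖ * ‖d‖ ≤ (Lθw * ‖w₁ - w₂‖) * ‖d‖)
      rw [div_mul_eq_mul_div, le_div_iff₀ hμ]
      nlinarith
  calc ‖gradw θ₁ w₁ - gradw θ₂ w₂‖
      ≤ ‖gradw θ₁ w₁ - gradw θ₂ w₁‖ + ‖gradw θ₂ w₁ - gradw θ₂ w₂‖ :=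
        norm_sub_le_norm_sub_add_norm_sub _ _ _
    _ ≤ Lwθ * ‖d‖ + Lww * ‖w₁ - w₂‖ :=
        add_le_add (hLip₂ θ₁ (hθstar w₁) θ₂ (hθstar w₂) w₁) (hLip₁ θ₂ (hθstar w₂) w₁ w₂)
    _ ≤ Lwθ * (Lθw / μ * ‖w₁ - w₂‖) + Lww * ‖w₁ - w₂‖ := by
        have := mul_le_mul_of_nonneg_left hdbound hLwθ.le
        linarith
    _ = (Lwθ * Lθw / μ + Lww) * ‖w₁ - w₂‖ := by ring
end

section
/- Let F and E be real inner product spaces, Θ ⊆ F a convex set, and f : F × E → ℝ with partial gradients ∇_θ f and ∇_w f satisfying: ‖∇_w f(θ, w) − ∇_w f(θ, w')‖ ≤ L_ww ‖w − w'‖ for all θ ∈ Θ; ‖∇_w f(θ, w) − ∇_w f(θ', w)‖ ≤ L_wθ ‖θ − θ'‖ for all w ∈ E; ‖∇_θ f(θ, w) − ∇_θ f(θ, w')‖ ≤ L_θw ‖w − w'‖ for all θ ∈ Θ; and θ ↦ f(θ, w) is μ-strongly concave on Θ for every w, with L_ww, L_wθ, L_θw, μ > 0. Let θ* : E → Θ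 assign to each w a maximizer of f(·, w) over Θ, define Φ(w) = f(θ*(w), w), and suppose Φ is differentiable with ∇Φ(w) = ∇_w f(θ*(w), w) for all w. Then for all w₁, w₂ ∈ E, Φ(w₁) ≤ Φ(w₂) + ⟪∇Φ(w₂), w₁ − w₂⟫ + (L₀/2)‖w₁ − w₂‖², where L₀ = L_wθ L_θw / μ + L_ww. -/
open RealInnerProductSpace

/-- Lemma 1, descent form: under the Lipschitz gradient conditions
and `μ`-strong concavity in `θ`, the max-function `Φ(w) = f(θ*(w), w)` with
`∇Φ(w) = ∇_w f(θ*(w), w)` satisfies the quadratic upper bound with constant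
`L₀ = L_wθ L_θw / μ + L_ww`. -/
theorem max_function_descent_bound
    {F E : Type*} [NormedAddCommGroup F] [InnerProductSpace ℝ F]
    [NormedAddCommGroup E] [InnerProductSpace ℝ E]
    (Θ : Set F) (hΘ : Convex ℝ Θ)
    (f : F → E → ℝ) (gradθ : F → E → F) (gradw : F → E → E)
    (hdiffθ : ∀ (w : E) (θ : F), HasFDerivAt (fun θ' => f θ' w) (innerSL ℝ (gradθ θ w)) θ)
    (hdiffw : ∀ (θ : F) (w : E), HasFDerivAt (fun w' => f θ w') (innerSL ℝ (gradw θ w)) w)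
    (Lww Lwθ Lθw μ : ℝ) (hLww : 0 < Lww) (hLwθ : 0 < Lwθ) (hLθw : 0 < Lθw) (hμ : 0 < μ)
    (hLip₁ : ∀ θ ∈ Θ, ∀ w w' : E, ‖gradw θ w - gradw θ w'‖ ≤ Lww * ‖w - w'‖)
    (hLip₂ : ∀ θ ∈ Θ, ∀ θ' ∈ Θ, ∀ w : E, ‖gradw θ w - gradw θ' w‖ ≤ Lwθ * ‖θ - θ'‖)
    (hLip₃ : ∀ θ ∈ Θ, ∀ w w' : E, ‖gradθ θ w - gradθ θ w'‖ ≤ Lθw * ‖w - w'‖)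
    (hconc : ∀ (w : E), ∀ θ₁ ∈ Θ, ∀ θ₂ ∈ Θ,
      f θ₁ w - f θ₂ w ≤ ⟪gradθ θ₂ w, θ₁ - θ₂⟫ - μ / 2 * ‖θ₁ - θ₂‖ ^ 2)
    (θstar : E → F) (hθstar : ∀ w : E, θstar w ∈ Θ)
    (hopt : ∀ (w : E), ∀ θ ∈ Θ, ⟪gradθ (θstar w) w, θ - θstar w⟫ ≤ 0)
    (Φ : E → ℝ) (hΦ : ∀ w : E, Φ w = f (θstar w) w)
    (hΦdiff : ∀ w : E, HasFDerivAt Φ (innerSL ℝ (gradw (θstar w) w)) w) :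
    ∀ w₁ w₂ : E,
      Φ w₁ ≤ Φ w₂ + ⟪gradw (θstar w₂) w₂, w₁ - w₂⟫ +
        (Lwθ * Lθw / μ + Lww) / 2 * ‖w₁ - w₂‖ ^ 2 := by

  intro w₁ w₂
  set Δ := w₁ - w₂ with hΔ
  set L := Lwθ * Lθw / μ + Lww with hL
  have hLpos : 0 < L := by positivity
  -- θstar is (Lθw/μ)-Lipschitz
  have hθLip : ∀ a b : E, ‖θstar a - θstar b‖ ≤ Lθw / μ * ‖a - b‖ := by
    intro a b
    have h1 := hconc a (θstar b) (hθstar b) (θstar a) (hθstar a)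
    have h2 := hconc a (θstar a) (hθstar a) (θstar b) (hθstar b)
    have h3 := hopt a (θstar b) (hθstar b)
    have hrev : ‖θstar b - θstar a‖ = ‖θstar a - θstar b‖ := norm_sub_rev _ _
    have hrev2 : ‖θstar b - θstar a‖ ^ 2 = ‖θstar a - θstar b‖ ^ 2 := by rw [hrev]
    rw [hrev2] at h1
    have hsum : μ * ‖θstar a - θstar b‖ ^ 2 ≤ ⟪gradθ (θstar b) a, θstar a - θstar b⟫ := by
      linarith [h1, h2, h3]
    have hsplit : ⟪gradθ (θstar b) a, θstar a - θstar b⟫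
        = ⟪gradθ (θstar b) a - gradθ (θstar b) b, θstar a - θstar b⟫
          + ⟪gradθ (θstar b) b, θstar a - θstar b⟫ := by
      rw [← inner_add_left, sub_add_cancel]
    have h4 := hopt b (θstar a) (hθstar a)
    have h5 : ⟪gradθ (θstar b) a - gradθ (θstar b) b, θstar a - θstar b⟫
        ≤ Lθw * ‖a - b‖ * ‖θstar a - θstar b‖ := by
      calc ⟪gradθ (θstar b) a - gradθ (θstar b) b, θstar a - θstar b⟫
          ≤ ‖gradθ (θstar b) a - gradθ (θstar b) b‖ * ‖θstar a - θstar b‖ :=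
            real_inner_le_norm _ _
        _ ≤ Lθw * ‖a - b‖ * ‖θstar a - θstar b‖ := by
            apply mul_le_mul_of_nonneg_right (hLip₃ (θstar b) (hθstar b) a b) (norm_nonneg _)
    have hkey : μ * ‖θstar a - θstar b‖ ^ 2 ≤ Lθw * ‖a - b‖ * ‖θstar a - θstar b‖ := by
      linarith [hsum, hsplit ▸ (add_le_add h5 h4)]
    rcases eq_or_lt_of_le (norm_nonneg (θstar a - θstar b)) with h0 | h0
    · rw [← h0]; positivity
    · rw [div_mul_eq_mul_div, le_div_iff₀ hμ]
      nlinarith [hkey, h0]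
  -- gradient of Φ is L-Lipschitz
  have hgLip : ∀ a b : E, ‖gradw (θstar a) a - gradw (θstar b) b‖ ≤ L * ‖a - b‖ := by
    intro a b
    calc ‖gradw (θstar a) a - gradw (θstar b) b‖
        ≤ ‖gradw (θstar a) a - gradw (θstar a) b‖
          + ‖gradw (θstar a) b - gradw (θstar b) b‖ :=
          norm_sub_le_norm_sub_add_norm_sub _ _ _
      _ ≤ Lww * ‖a - b‖ + Lwθ * ‖θstar a - θstar b‖ :=
          add_le_add (hLip₁ (θstar a) (hθstar a) a b)
            (hLip₂ (θstar a) (hθstar a) (θstar b) (hθstar b) b)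
      _ ≤ Lww * ‖a - b‖ + Lwθ * (Lθw / μ * ‖a - b‖) :=
          add_le_add le_rfl (mul_le_mul_of_nonneg_left (hθLip a b) hLwθ.le)
      _ = L * ‖a - b‖ := by rw [hL]; field_simp; ring
  -- 1D reduction
  have hline : ∀ t : ℝ, HasDerivAt (fun s : ℝ => w₂ + s • Δ) Δ t := by
    intro t
    have := ((hasDerivAt_id t).smul_const Δ).const_add w₂
    simpa using this
  have hg : ∀ t : ℝ, HasDerivAt (fun s : ℝ => Φ (w₂ + s • Δ))
      ⟪gradw (θstar (w₂ + t • Δ)) (w₂ + t • Δ), Δ⟫ t := by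
    intro t
    have := (hΦdiff (w₂ + t • Δ)).comp_hasDerivAt t (hline t)
    simp at this
    exact this
  set c : ℝ := ⟪gradw (θstar w₂) w₂, Δ⟫ with hc
  set φ : ℝ → ℝ := fun t => Φ (w₂ + t • Δ) - c * t - L / 2 * ‖Δ‖ ^ 2 * t ^ 2 with hφdef
  have hφ : ∀ t : ℝ, HasDerivAt φ
      (⟪gradw (θstar (w₂ + t • Δ)) (w₂ + t • Δ), Δ⟫ - c - L * ‖Δ‖ ^ 2 * t) t := by
    intro t
    have h1 : HasDerivAt (fun s : ℝ => c * s) c t := by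
      simpa using (hasDerivAt_id t).const_mul c
    have h2 : HasDerivAt (fun s : ℝ => L / 2 * ‖Δ‖ ^ 2 * s ^ 2)
        (L * ‖Δ‖ ^ 2 * t) t := by
      have := (hasDerivAt_pow 2 t).const_mul (L / 2 * ‖Δ‖ ^ 2)
      refine this.congr_deriv ?_
      ring
    exact ((hg t).sub h1).sub h2
  have hanti : AntitoneOn φ (Set.Icc (0 : ℝ) 1) := by
    apply antitoneOn_of_deriv_nonpos (convex_Icc 0 1)
    · exact fun t _ => (hφ t).continuousAt.continuousWithinAt
    · exact fun t _ => ((hφ t).differentiableAt).differentiableWithinAt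
    · intro t ht
      rw [interior_Icc] at ht
      rw [(hφ t).deriv]
      have hdiff : ⟪gradw (θstar (w₂ + t • Δ)) (w₂ + t • Δ), Δ⟫ - c
          = ⟪gradw (θstar (w₂ + t • Δ)) (w₂ + t • Δ) - gradw (θstar w₂) w₂, Δ⟫ := by
        rw [inner_sub_left, hc]
      have hb : ⟪gradw (θstar (w₂ + t • Δ)) (w₂ + t • Δ) - gradw (θstar w₂) w₂, Δ⟫
          ≤ L * ‖Δ‖ ^ 2 * t := by
        calc ⟪gradw (θstar (w₂ + t • Δ)) (w₂ + t • Δ) - gradw (θstar w₂) w₂, Δ⟫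
            ≤ ‖gradw (θstar (w₂ + t • Δ)) (w₂ + t • Δ) - gradw (θstar w₂) w₂‖ * ‖Δ‖ :=
              real_inner_le_norm _ _
          _ ≤ L * ‖w₂ + t • Δ - w₂‖ * ‖Δ‖ :=
              mul_le_mul_of_nonneg_right (hgLip _ _) (norm_nonneg _)
          _ = L * ‖Δ‖ ^ 2 * t := by
              rw [add_sub_cancel_left, norm_smul, Real.norm_eq_abs,
                abs_of_pos ht.1]
              ring
      linarith [hdiff ▸ hb]
  have h01 := hanti (Set.mem_Icc.mpr ⟨le_refl 0, zero_le_one⟩)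
    (Set.mem_Icc.mpr ⟨zero_le_one, le_refl 1⟩) zero_le_one
  have hφ0 : φ 0 = Φ w₂ := by simp [hφdef]
  have hφ1 : φ 1 = Φ w₁ - c - L / 2 * ‖Δ‖ ^ 2 := by
    simp [hφdef, hΔ]
  rw [hφ0, hφ1] at h01
  linarith
end

section
/- Let F and E be real inner product spaces, Θ ⊆ F a convex set, and f : F × E → ℝ with partial gradients ∇_θ f and ∇_w f such that ‖∇_w f(θ, w) − ∇_w f(θ', w)‖ ≤ L_wθ ‖θ − θ'‖ for all θ, θ' ∈ Θ and w ∈ E, with L_wθ > 0, and θ ↦ f(θ, w) is μ-strongly concave on Θ for every w ∈ E with μ > 0. Fix w ∈ E. Let n be a positive integer and, for each i ∈ {1, …, n}, let θᵢ* ∈ Θ satisfy ⟪∇_θ f(θᵢ*, w), θ − θᵢ*⟫ ≤ 0 for all θ ∈ Θ, and let θ̂ᵢ ∈ Θ satisfy ⟪θᵢ* − θ̂ᵢ, ∇_θ f(θ̂ᵢ, w)⟫ ≤ δ for some δ ≥ 0. Then ‖ (1/n) ∑_{i=1}^n ∇_w f(θ̂ᵢ, w) − (1/n) ∑_{i=1}^n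 ∇_w f(θᵢ*, w) ‖ ≤ L_wθ √(δ/μ). -/
open RealInnerProductSpace Finset

/-- Lemma 2: the averaged `w`-gradients at `δ`-approximate maximizers
differ from those at the exact maximizers by at most `L_wθ √(δ/μ)`. -/
theorem approx_stochastic_gradient_gap
    {F E : Type*} [NormedAddCommGroup F] [InnerProductSpace ℝ F]
    [NormedAddCommGroup E] [InnerProductSpace ℝ E]
    (Θ : Set F) (hΘ : Convex ℝ Θ)
    (f : F → E → ℝ) (gradθ : F → E → F) (gradw : F → E → E)
    (hdiffθ : ∀ (w : E) (θ : F), HasFDerivAt (fun θ' => f θ' w) (innerSL ℝ (gradθ θ w)) θ)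
    (hdiffw : ∀ (θ : F) (w : E), HasFDerivAt (fun w' => f θ w') (innerSL ℝ (gradw θ w)) w)
    (Lwθ μ : ℝ) (hLwθ : 0 < Lwθ) (hμ : 0 < μ)
    (hLip : ∀ θ ∈ Θ, ∀ θ' ∈ Θ, ∀ w : E, ‖gradw θ w - gradw θ' w‖ ≤ Lwθ * ‖θ - θ'‖)
    (hconc : ∀ (w : E), ∀ θ₁ ∈ Θ, ∀ θ₂ ∈ Θ,
      f θ₁ w - f θ₂ w ≤ ⟪gradθ θ₂ w, θ₁ - θ₂⟫ - μ / 2 * ‖θ₁ - θ₂‖ ^ 2)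
    (w : E) (n : ℕ) (hn : 0 < n)
    (θstar θhat : Fin n → F)
    (hθstar : ∀ i, θstar i ∈ Θ) (hθhat : ∀ i, θhat i ∈ Θ)
    (hopt : ∀ i, ∀ θ ∈ Θ, ⟪gradθ (θstar i) w, θ - θstar i⟫ ≤ 0)
    (δ : ℝ) (hδ : 0 ≤ δ)
    (happrox : ∀ i, ⟪θstar i - θhat i, gradθ (θhat i) w⟫ ≤ δ) :
    ‖(n : ℝ)⁻¹ • ∑ i, gradw (θhat i) w - (n : ℝ)⁻¹ • ∑ i, gradw (θstar i) w‖ ≤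
      Lwθ * Real.sqrt (δ / μ) := by
  have key : ∀ i, ‖θhat i - θstar i‖ ≤ Real.sqrt (δ / μ) := by
    intro i
    have h1 := hconc w (θstar i) (hθstar i) (θhat i) (hθhat i)
    have h2 := hconc w (θhat i) (hθhat i) (θstar i) (hθstar i)
    have h3 := hopt i (θhat i) (hθhat i)
    have h4 := happrox i
    have hinner : ⟪gradθ (θhat i) w, θstar i - θhat i⟫ = ⟪θstar i - θhat i, gradθ (θhat i) w⟫ :=
      real_inner_comm _ _
    have hnorm : ‖θstar i - θhat i‖ = ‖θhat i - θstar i‖ := norm_sub_rev _ _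
    have hnorm2 : ‖θstar i - θhat i‖ ^ 2 = ‖θhat i - θstar i‖ ^ 2 := by rw [hnorm]
    rw [hnorm2] at h1
    have hd2 : μ * ‖θhat i - θstar i‖ ^ 2 ≤ δ := by
      linarith [h1, h2, h3, h4]
    have hsq : ‖θhat i - θstar i‖ ^ 2 ≤ δ / μ := by
      rw [le_div_iff₀ hμ]; linarith [hd2]
    calc ‖θhat i - θstar i‖ = Real.sqrt (‖θhat i - θstar i‖ ^ 2) := by
          rw [Real.sqrt_sq (norm_nonneg _)]
      _ ≤ Real.sqrt (δ / μ) := Real.sqrt_le_sqrt hsq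
  have hterm : ∀ i ∈ Finset.univ (α := Fin n),
      ‖gradw (θhat i) w - gradw (θstar i) w‖ ≤ Lwθ * Real.sqrt (δ / μ) := by
    intro i _
    calc ‖gradw (θhat i) w - gradw (θstar i) w‖
        ≤ Lwθ * ‖θhat i - θstar i‖ := hLip _ (hθhat i) _ (hθstar i) w
      _ ≤ Lwθ * Real.sqrt (δ / μ) := by
          exact mul_le_mul_of_nonneg_left (key i) hLwθ.le
  calc ‖(n : ℝ)⁻¹ • ∑ i, gradw (θhat i) w - (n : ℝ)⁻¹ • ∑ i, gradw (θstar i) w‖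
      = ‖(n : ℝ)⁻¹ • ∑ i, (gradw (θhat i) w - gradw (θstar i) w)‖ := by
        rw [Finset.sum_sub_distrib, smul_sub]
    _ = (n : ℝ)⁻¹ * ‖∑ i, (gradw (θhat i) w - gradw (θstar i) w)‖ := by
        rw [norm_smul, Real.norm_eq_abs, abs_of_nonneg (by positivity)]
    _ ≤ (n : ℝ)⁻¹ * ∑ i, ‖gradw (θhat i) w - gradw (θstar i) w‖ := by
        gcongr; exact norm_sum_le _ _
    _ ≤ (n : ℝ)⁻¹ * ∑ _i : Fin n, (Lwθ * Real.sqrt (δ / μ)) :=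
        mul_le_mul_of_nonneg_left (Finset.sum_le_sum hterm) (by positivity)
    _ = Lwθ * Real.sqrt (δ / μ) := by
        rw [Finset.sum_const, Finset.card_univ, Fintype.card_fin, nsmul_eq_mul]
        field_simp
end
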